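/- Let R be an associative ring, κ a regular cardinal with the property that every left ideal of R is generated by fewer than κ elements, and assume R is left hereditary. Then a left R-module F is κ-flat if and only if every subset of F of cardinality less than κ is contained in a projective submodule of F generated by fewer than κ elements. -/

import Mathlib

open CategoryTheory CategoryTheory.Limits

universe u

variable {R : Type u} [Ring R]

/-- A left `R`-module is `κ`-presentable if it is the cokernel of a morphism of free
modules each with fewer than `κ` generators. -/
def IsKappaPresentable (κ : Cardinal.{u}) (E : ModuleCat.{u} R) : Prop :=
  ∃ (X Y : Type u) (_ : Cardinal.mk X < κ) (_ : Cardinal.mk Y < κ)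
    (g : (X →₀ R) →ₗ[R] (Y →₀ R)),
    Nonempty ((((Y →₀ R)) ⧸ (LinearMap.range g)) ≃ₗ[R] E)

/-- A left `R`-module `F` is `κ`-flat if every morphism from a `κ`-presentable module
into `F` factors through a projective module. -/
def IsKappaFlat (κ : Cardinal.{u}) (F : ModuleCat.{u} R) : Prop :=
  ∀ (E : ModuleCat.{u} R), IsKappaPresentable κ E → ∀ φ : E ⟶ F,
    ∃ (P : ModuleCat.{u} R) (_ : Projective P) (α : E ⟶ P) (β : P ⟶ F), α ≫ β = φ

namespace KappaFlatAux

section WellOrdered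

variable {X : Type u} [LinearOrder X] [WellFoundedLT X]

/-- Kaplansky-style layer structure on a submodule of a free module over a well-ordered
basis: for each `x` we have the ideal of `x`-th coefficients of elements of `N` supported
on `Set.Iic x`, together with a linear section picking an element of `N` with prescribed
top coefficient. -/
theorem kaplansky_main (hhered : ∀ I : Ideal R, Module.Projective R I)
    (N : Submodule R (X →₀ R)) :
    ∃ (I : X → Ideal R) (τ : ∀ x, I x →ₗ[R] N),
      (∀ (x : X) (i : I x), (↑(τ x i) : X →₀ R) x = (i : R)) ∧
      (∀ (x : X) (i : I x) (y : X), x < y → (↑(τ x i) : X →₀ R) y = 0) ∧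
      (∀ (f : N) (x : X), (∀ y ∈ (f : X →₀ R).support, y ≤ x) → (f : X →₀ R) x ∈ I x) := by
  classical
  set Nle : X → Submodule R (X →₀ R) :=
    fun x => N ⊓ Finsupp.supported R R (Set.Iic x) with hNle
  set ev : ∀ x : X, Nle x →ₗ[R] R :=
    fun x => (Finsupp.lapply x).comp (Nle x).subtype with hev
  set I : X → Ideal R := fun x => LinearMap.range (ev x) with hI
  have hσ : ∀ x, ∃ σ : I x →ₗ[R] Nle x,
      (ev x).rangeRestrict ∘ₗ σ = LinearMap.id := by
    intro x
    haveI := hhered (I x)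
    exact Module.projective_lifting_property _ _ (LinearMap.surjective_rangeRestrict (ev x))
  choose σ hσ using hσ
  refine ⟨I, fun x => (Submodule.inclusion (inf_le_left : Nle x ≤ N)).comp (σ x), ?_, ?_, ?_⟩
  · intro x i
    have h := congrArg Subtype.val (LinearMap.congr_fun (hσ x) i)
    simpa [hev] using h
  · intro x i y hxy
    have hmem : ((σ x i : X →₀ R)) ∈ Finsupp.supported R R (Set.Iic x) :=
      (σ x i).2.2
    have hsupp := (Finsupp.mem_supported R _).1 hmem
    by_contra hne
    exact (not_le_of_gt hxy) (hsupp (Finsupp.mem_support_iff.2 hne))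
  · intro f x hf
    refine ⟨⟨(f : X →₀ R), ⟨f.2, (Finsupp.mem_supported R _).2 ?_⟩⟩, rfl⟩
    intro y hy
    exact hf y hy

/-- The lifted generators span `N`. -/
theorem span_eq_top (N : Submodule R (X →₀ R)) (I : X → Ideal R)
    (τ : ∀ x, I x →ₗ[R] N)
    (h1 : ∀ (x : X) (i : I x), (↑(τ x i) : X →₀ R) x = (i : R))
    (h2 : ∀ (x : X) (i : I x) (y : X), x < y → (↑(τ x i) : X →₀ R) y = 0)
    (h3 : ∀ (f : N) (x : X), (∀ y ∈ (f : X →₀ R).support, y ≤ x) →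
      (f : X →₀ R) x ∈ I x)
    (G : ∀ x, Set (I x)) (hG : ∀ x, Submodule.span R (G x) = ⊤) :
    Submodule.span R (⋃ x, τ x '' G x) = ⊤ := by
  classical
  set S := Submodule.span R (⋃ x, τ x '' G x) with hS
  have hτS : ∀ (x : X) (i : I x), τ x i ∈ S := by
    intro x i
    have hi : i ∈ Submodule.span R (G x) := by rw [hG x]; trivial
    refine Submodule.span_induction (p := fun j _ => τ x j ∈ S) ?_ ?_ ?_ ?_ hi
    · intro j hj
      exact Submodule.subset_span (Set.mem_iUnion.2 ⟨x, Set.mem_image_of_mem _ hj⟩)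
    · simpa using S.zero_mem
    · intro a b _ _ ha hb
      simpa [map_add] using S.add_mem ha hb
    · intro r a _ ha
      simpa [map_smul] using S.smul_mem r ha
  have main : ∀ x : X, ∀ f : N, (∀ y ∈ (f : X →₀ R).support, y ≤ x) → f ∈ S := by
    intro x
    induction x using WellFoundedLT.induction with
    | ind x IH =>
      intro f hf
      have hmem : (f : X →₀ R) x ∈ I x := h3 f x hf
      set c : I x := ⟨(f : X →₀ R) x, hmem⟩ with hc
      set g : N := f - τ x c with hgdef
      have hgy : ∀ y : X, ¬y < x → (g : X →₀ R) y = 0 := by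
        intro y hy
        rcases eq_or_ne y x with rfl | hne
        · have : (g : X →₀ R) y = (f : X →₀ R) y - (↑(τ y c) : X →₀ R) y := rfl
          rw [this, h1 y c]
          simp [hc]
        · have hxy : x < y := (lt_or_gt_of_ne hne).resolve_left hy
          have hfy : (f : X →₀ R) y = 0 := by
            by_contra hne2
            exact (not_le_of_gt hxy) (hf y (Finsupp.mem_support_iff.2 hne2))
          have : (g : X →₀ R) y = (f : X →₀ R) y - (↑(τ x c) : X →₀ R) y := rfl
          rw [this, hfy, h2 x c y hxy, sub_zero]
      by_cases hg0 : g = 0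
      · have : f = τ x c := by rw [hgdef] at hg0; exact eq_of_sub_eq_zero hg0
        rw [this]; exact hτS x c
      · have hgne : ((g : X →₀ R)).support.Nonempty := by
          rw [Finsupp.support_nonempty_iff]
          intro hzero
          exact hg0 (Subtype.ext hzero)
        set y := ((g : X →₀ R)).support.max' hgne with hy
        have hymem : y ∈ ((g : X →₀ R)).support := Finset.max'_mem _ _
        have hyx : y < x := by
          by_contra hyx
          exact (Finsupp.mem_support_iff.1 hymem) (hgy y hyx)
        have hgS : g ∈ S := IH y hyx g (fun z hz => Finset.le_max' _ z hz)
        have : f = g + τ x c := by rw [hgdef]; abel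
        rw [this]; exact S.add_mem hgS (hτS x c)
  rw [eq_top_iff]
  rintro f -
  by_cases h0 : (f : X →₀ R) = 0
  · have : f = 0 := Subtype.ext h0
    rw [this]; exact S.zero_mem
  · have hne : ((f : X →₀ R)).support.Nonempty := Finsupp.support_nonempty_iff.2 h0
    exact main (((f : X →₀ R)).support.max' hne) f (fun z hz => Finset.le_max' _ z hz)

/-- Kaplansky's theorem: over a left hereditary ring, any submodule of a free module
is projective. -/
theorem projective_submodule (hhered : ∀ I : Ideal R, Module.Projective R I)
    (N : Submodule R (X →₀ R)) : Module.Projective R N := by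
  classical
  obtain ⟨I, τ, h1, h2, h3⟩ := kaplansky_main hhered N
  haveI : ∀ x, Module.Projective R (I x) := fun x => hhered (I x)
  set Φ : (Π₀ x, I x) →ₗ[R] N := DFinsupp.lsum ℕ (M := fun x => ↥(I x)) τ with hΦ
  have happ : ∀ m : Π₀ x, I x, Φ m = ∑ i ∈ m.support, τ i (m i) := by
    intro m
    simp [hΦ, DFinsupp.lsum_apply_apply, DFinsupp.sumAddHom_apply, DFinsupp.sum]
  have hsurj : Function.Surjective Φ := by
    rw [← LinearMap.range_eq_top, eq_top_iff,
      ← span_eq_top N I τ h1 h2 h3 (fun x => Set.univ) (fun x => Submodule.span_univ)]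
    refine Submodule.span_le.2 ?_
    intro z hz
    rw [Set.mem_iUnion] at hz
    obtain ⟨x, i, -, rfl⟩ := hz
    exact ⟨DFinsupp.single x i, by simp [hΦ, DFinsupp.lsum_single]⟩
  have hinj : Function.Injective Φ := by
    rw [injective_iff_map_eq_zero]
    intro m hm
    by_contra hm0
    have hne : m.support.Nonempty := by
      rw [Finset.nonempty_iff_ne_empty]
      intro h
      exact hm0 (DFinsupp.support_eq_empty.1 h)
    set x := m.support.max' hne with hx
    have hxmem : x ∈ m.support := Finset.max'_mem _ _
    have hzero : ((Φ m : X →₀ R)) x = 0 := by rw [hm]; rfl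
    rw [happ] at hzero
    have hcoe : ((↑(∑ i ∈ m.support, τ i (m i)) : X →₀ R)) x
        = ∑ i ∈ m.support, ((↑(τ i (m i)) : X →₀ R)) x := by
      rw [Submodule.coe_sum]
      rw [Finsupp.finset_sum_apply]
    rw [hcoe] at hzero
    rw [Finset.sum_eq_single_of_mem x hxmem] at hzero
    · rw [h1 x (m x)] at hzero
      exact DFinsupp.mem_support_iff.1 hxmem (Subtype.ext hzero)
    · intro i hi hix
      exact h2 i (m i) x (lt_of_le_of_ne (Finset.le_max' _ i hi) hix)
  exact Module.Projective.of_equiv (LinearEquiv.ofBijective Φ ⟨hinj, hsurj⟩)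

/-- If every ideal needs fewer than `κ` generators, so does every submodule of a free
module with fewer than `κ` basis elements. -/
theorem exists_small_generating (κ : Cardinal.{u}) (hκ : κ.IsRegular)
    (hgen : ∀ I : Ideal R, ∃ s : Set R, Cardinal.mk s < κ ∧ Ideal.span s = I)
    (hhered : ∀ I : Ideal R, Module.Projective R I)
    (hX : Cardinal.mk X < κ) (N : Submodule R (X →₀ R)) :
    ∃ T : Set N, Cardinal.mk T < κ ∧ Submodule.span R T = ⊤ := by
  classical
  obtain ⟨I, τ, h1, h2, h3⟩ := kaplansky_main hhered N
  have hsets : ∀ x, ∃ G : Set (I x), Cardinal.mk G < κ ∧ Submodule.span R G = ⊤ := by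
    intro x
    obtain ⟨s, hs, hspan⟩ := hgen (I x)
    have hsub : s ⊆ (I x : Set R) := hspan ▸ Ideal.subset_span
    refine ⟨Subtype.val ⁻¹' s, lt_of_le_of_lt
      (Cardinal.mk_preimage_of_injective _ _ Subtype.val_injective) hs, ?_⟩
    apply Submodule.map_injective_of_injective (I x).injective_subtype
    rw [Submodule.map_span, Submodule.map_top, Submodule.range_subtype,
      Submodule.coe_subtype,
      Set.image_preimage_eq_of_subset (fun r hr => ⟨⟨r, hsub hr⟩, rfl⟩)]
    exact hspan
  choose G hGκ hGtop using hsets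
  refine ⟨⋃ x, τ x '' G x, ?_, span_eq_top N I τ h1 h2 h3 G hGtop⟩
  refine lt_of_le_of_lt Cardinal.mk_iUnion_le_sum_mk ?_
  refine Cardinal.sum_lt_of_isRegular hκ hX ?_
  intro x
  exact lt_of_le_of_lt Cardinal.mk_image_le (hGκ x)

end WellOrdered

/-- Kaplansky's theorem without a fixed well-order. -/
theorem projective_submodule' (hhered : ∀ I : Ideal R, Module.Projective R I)
    {X : Type u} (N : Submodule R (X →₀ R)) : Module.Projective R N := by
  obtain ⟨_, _⟩ := exists_wellOrder X
  exact projective_submodule hhered N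

theorem exists_small_generating' (κ : Cardinal.{u}) (hκ : κ.IsRegular)
    (hgen : ∀ I : Ideal R, ∃ s : Set R, Cardinal.mk s < κ ∧ Ideal.span s = I)
    (hhered : ∀ I : Ideal R, Module.Projective R I)
    {X : Type u} (hX : Cardinal.mk X < κ) (N : Submodule R (X →₀ R)) :
    ∃ T : Set N, Cardinal.mk T < κ ∧ Submodule.span R T = ⊤ := by
  obtain ⟨_, _⟩ := exists_wellOrder X
  exact exists_small_generating κ hκ hgen hhered hX N

/-- Any module generated by fewer than `κ` elements is `κ`-presentable. -/
theorem isKappaPresentable_of_small (κ : Cardinal.{u}) (hκ : κ.IsRegular)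
    (hgen : ∀ I : Ideal R, ∃ s : Set R, Cardinal.mk s < κ ∧ Ideal.span s = I)
    (hhered : ∀ I : Ideal R, Module.Projective R I)
    {W : Type u} [AddCommGroup W] [Module R W] (s : Set W)
    (hs : Cardinal.mk s < κ) (hspan : Submodule.span R s = ⊤) :
    IsKappaPresentable κ (ModuleCat.of R W) := by
  classical
  set π : (s →₀ R) →ₗ[R] W := Finsupp.linearCombination R Subtype.val with hπdef
  have hπ : Function.Surjective π := by
    rw [← LinearMap.range_eq_top, hπdef, Finsupp.range_linearCombination,
      Subtype.range_coe, hspan]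
  obtain ⟨T, hT, hTtop⟩ := exists_small_generating' κ hκ hgen hhered hs (LinearMap.ker π)
  refine ⟨T, s, hT, hs,
    (LinearMap.ker π).subtype ∘ₗ Finsupp.linearCombination R Subtype.val, ?_⟩
  have hrange : LinearMap.range ((LinearMap.ker π).subtype ∘ₗ
      Finsupp.linearCombination R (Subtype.val : T → LinearMap.ker π)) = LinearMap.ker π := by
    rw [LinearMap.range_comp, Finsupp.range_linearCombination, Subtype.range_coe, hTtop,
      Submodule.map_top, Submodule.range_subtype]
  exact ⟨(Submodule.quotEquivOfEq _ _ hrange).trans (π.quotKerEquivOfSurjective hπ)⟩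

end KappaFlatAux

open KappaFlatAux in
/-- Over a left hereditary ring `R` all of whose left ideals are generated by fewer than
`κ` elements (`κ` a regular cardinal), a left `R`-module `F` is `κ`-flat if and only if
every subset of `F` of cardinality `< κ` is contained in a projective submodule of `F`
generated by fewer than `κ` elements. -/
theorem isKappaFlat_iff_kappaProjective_of_hereditary
    (κ : Cardinal.{u}) (hκ : κ.IsRegular)
    (hgen : ∀ I : Ideal R, ∃ s : Set R, Cardinal.mk s < κ ∧ Ideal.span s = I)
    (hhered : ∀ I : Ideal R, Module.Projective R I)
    (F : ModuleCat.{u} R) :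
    IsKappaFlat κ F ↔
      ∀ s : Set F, Cardinal.mk s < κ →
        ∃ N : Submodule R F, s ⊆ (N : Set F) ∧ Module.Projective R N ∧
          ∃ t : Set F, Cardinal.mk t < κ ∧ t ⊆ (N : Set F) ∧ Submodule.span R t = N := by
  constructor
  · -- κ-flat implies subsets lie in small projective submodules
    intro hflat s hs
    set M : Submodule R F := Submodule.span R s with hM
    have hpres : IsKappaPresentable κ (ModuleCat.of R M) := by
      refine isKappaPresentable_of_small κ hκ hgen hhered (Subtype.val ⁻¹' s : Set M)
        (lt_of_le_of_lt (Cardinal.mk_preimage_of_injective _ _ Subtype.val_injective) hs) ?_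
      apply Submodule.map_injective_of_injective M.injective_subtype
      rw [Submodule.map_span, Submodule.map_top, Submodule.range_subtype,
        Submodule.coe_subtype,
        Set.image_preimage_eq_of_subset
          (fun m hm => ⟨⟨m, Submodule.subset_span hm⟩, rfl⟩)]
    obtain ⟨P, hP, α, β, hαβ⟩ := hflat _ hpres (ModuleCat.ofHom M.subtype)
    let α' : M →ₗ[R] ↑P := α.hom
    let β' : ↑P →ₗ[R] ↑F := β.hom
    have hcomp : β'.comp α' = M.subtype := congrArg ModuleCat.Hom.hom hαβ
    have hβα : ∀ m : M, β' (α' m) = (m : ↑F) := fun m => LinearMap.congr_fun hcomp m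
    have hαinj : Function.Injective α' := by
      intro a b hab
      exact Subtype.ext (by rw [← hβα a, ← hβα b, hab])
    have hPmod : Module.Projective R P := (IsProjective.iff_projective _).mpr hP
    obtain ⟨sec, hsec⟩ := Module.projective_def'.mp hPmod
    have hsecinj : Function.Injective sec := by
      intro a b hab
      have ha := LinearMap.congr_fun hsec a
      have hb := LinearMap.congr_fun hsec b
      simp only [LinearMap.comp_apply, LinearMap.id_apply] at ha hb
      rw [← ha, ← hb, hab]
    set j : M →ₗ[R] (↑P →₀ R) := sec ∘ₗ α' with hj
    have hjinj : Function.Injective j := by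
      intro a b hab
      exact hαinj (hsecinj hab)
    haveI : Module.Projective R (LinearMap.range j) := projective_submodule' hhered _
    have hMproj : Module.Projective R M :=
      Module.Projective.of_equiv (LinearEquiv.ofInjective j hjinj).symm
    exact ⟨M, Submodule.subset_span, hMproj, s, hs, Submodule.subset_span, rfl⟩
  · -- subsets lying in small projective submodules implies κ-flat
    intro h E hE φ
    obtain ⟨X, Y, hX, hY, g, ⟨e⟩⟩ := hE
    set v : Y → F := fun y => φ (e (Submodule.Quotient.mk (Finsupp.single y 1))) with hv
    obtain ⟨N, hsN, hNproj, -⟩ := h (Set.range v)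
      (lt_of_le_of_lt Cardinal.mk_range_le hY)
    have hrange : ∀ z : E, φ z ∈ N := by
      intro z
      obtain ⟨w, rfl⟩ := e.surjective z
      obtain ⟨u, rfl⟩ := Submodule.Quotient.mk_surjective _ w
      induction u using Finsupp.induction with
      | zero => simp
      | single_add a b f _ _ ih =>
        have hsingle : φ (e (Submodule.Quotient.mk (Finsupp.single a b))) ∈ N := by
          have h1 : Finsupp.single a b = b • Finsupp.single a (1 : R) := by
            rw [Finsupp.smul_single, smul_eq_mul, mul_one]
          rw [h1, Submodule.Quotient.mk_smul, map_smul, map_smul]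
          exact N.smul_mem b (hsN (Set.mem_range_self a))
        rw [Submodule.Quotient.mk_add, map_add, map_add]
        exact N.add_mem hsingle ih
    refine ⟨ModuleCat.of R N, (IsProjective.iff_projective _).mp hNproj,
      ModuleCat.ofHom (LinearMap.codRestrict N φ.hom hrange), ModuleCat.ofHom N.subtype, ?_⟩
    apply ModuleCat.hom_ext
    exact LinearMap.subtype_comp_codRestrict φ.hom N hrange
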